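/- Let γ = γ_0 γ_1 … γ_n be a Hamilton path in a graph G. Suppose there exist indices 1 ≤ i < j ≤ n−1 such that γ_0 γ_i, γ_{i−1} γ_{j+1}, and γ_n γ_j are all edges available to be added. Then the edge set E(γ) ∪ {γ_0γ_i, γ_{i−1}γ_{j+1}, γ_nγ_j} minus {γ_{i−1}γ_i, γ_jγ_{j+1}} forms a Hamilton cycle. -/

import Mathlib

open SimpleGraph Walk

/-- Ascending walk along `g 0, g 1, …, g k`. -/
def ascWalk {V : Type*} (G : SimpleGraph V) (g : ℕ → V) (m : ℕ)
    (hadj : ∀ t, t + 1 < m → G.Adj (g t) (g (t + 1))) :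
    (k : ℕ) → k < m → G.Walk (g 0) (g k)
  | 0, _ => Walk.nil
  | (k + 1), h => (ascWalk G g m hadj k (by omega)).concat (hadj k h)

lemma ascWalk_support {V : Type*} (G : SimpleGraph V) (g : ℕ → V) (m : ℕ)
    (hadj : ∀ t, t + 1 < m → G.Adj (g t) (g (t + 1))) :
    ∀ (k : ℕ) (h : k < m), (ascWalk G g m hadj k h).support = (List.range (k + 1)).map g := by
  intro k
  induction k with
  | zero => intro h; simp [ascWalk, List.range_succ]
  | succ k ih =>
      intro h
      rw [ascWalk, Walk.support_concat, ih (by omega)]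
      simp [List.range_succ, List.concat_eq_append]

lemma ascWalk_edges {V : Type*} (G : SimpleGraph V) (g : ℕ → V) (m : ℕ)
    (hadj : ∀ t, t + 1 < m → G.Adj (g t) (g (t + 1))) :
    ∀ (k : ℕ) (h : k < m), (ascWalk G g m hadj k h).edges
      = (List.range k).map (fun t => s(g t, g (t + 1))) := by
  intro k
  induction k with
  | zero => intro h; simp [ascWalk]
  | succ k ih =>
      intro h
      rw [ascWalk, Walk.edges_concat, ih (by omega)]
      simp [List.range_succ, List.concat_eq_append]

lemma exists_hamiltonian_cycle_of_cyclic {V : Type*} [DecidableEq V] (G : SimpleGraph V)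
    (m : ℕ) (hm : 3 ≤ m) (g : ℕ → V)
    (hinj : ∀ a, a < m → ∀ b, b < m → g a = g b → a = b)
    (hsurj : ∀ v, ∃ k, k < m ∧ g k = v)
    (hadj : ∀ t, t + 1 < m → G.Adj (g t) (g (t + 1)))
    (hlast : G.Adj (g (m - 1)) (g 0)) :
    ∃ (v : V) (c : G.Walk v v), c.IsHamiltonianCycle := by
  have hm1 : m - 1 < m := by omega
  set p : G.Walk (g 0) (g (m - 1)) := ascWalk G g m hadj (m - 1) hm1 with hp
  have hsup : p.support = (List.range m).map g := by
    rw [hp, ascWalk_support, show m - 1 + 1 = m from by omega]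
  have hnodup : p.support.Nodup := by
    rw [hsup]
    refine List.Nodup.map_on ?_ (List.nodup_range (n := m))
    intro a ha b hb hab
    exact hinj a (List.mem_range.mp ha) b (List.mem_range.mp hb) hab
  have hpath : p.IsPath := Walk.IsPath.mk' hnodup
  have hedges : p.edges = (List.range (m - 1)).map (fun t => s(g t, g (t + 1))) :=
    ascWalk_edges G g m hadj (m - 1) hm1
  have hne : s(g 0, g (m - 1)) ∉ p.reverse.edges := by
    rw [Walk.edges_reverse, List.mem_reverse, hedges]
    simp only [List.mem_map, List.mem_range, not_exists]
    rintro t ⟨ht, heq⟩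
    rw [Sym2.eq_iff] at heq
    rcases heq with ⟨h1, h2⟩ | ⟨h1, h2⟩
    · have := hinj t (by omega) 0 (by omega) h1
      have := hinj (t + 1) (by omega) (m - 1) (by omega) h2
      omega
    · have := hinj (t + 1) (by omega) 0 (by omega) h2
      omega
  have hcyc : (Walk.cons hlast.symm p.reverse).IsCycle := by
    rw [Walk.cons_isCycle_iff]
    exact ⟨hpath.reverse, hne⟩
  refine ⟨g 0, Walk.cons hlast.symm p.reverse, hcyc, ?_⟩
  intro v
  have hni : ¬ (Walk.cons hlast.symm p.reverse).Nil := hcyc.not_nil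
  have hts : (Walk.cons hlast.symm p.reverse).tail.support = p.reverse.support := by
    rw [Walk.support_tail_of_not_nil _ hni, Walk.support_cons, List.tail_cons]
  rw [hts]
  refine List.count_eq_one_of_mem ?_ ?_
  · rw [Walk.support_reverse]; exact List.nodup_reverse.mpr hnodup
  · rw [Walk.support_reverse, List.mem_reverse, hsup]
    obtain ⟨k, hk, rfl⟩ := hsurj v
    exact List.mem_map_of_mem (f := g) (List.mem_range.mpr hk)

/-- The rotation permutation of indices, as a function on `ℕ`. -/
def rho (n I J t : ℕ) : ℕ :=
  if t = 0 then 0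
  else if t ≤ J - I + 1 then I + t - 1
  else if t ≤ n - I + 1 then n + J - I + 2 - t
  else n + 1 - t

lemma rho_le (n I J : ℕ) (h1 : 1 ≤ I) (h2 : I < J) (h3 : J + 1 ≤ n) {t : ℕ} (ht : t ≤ n) :
    rho n I J t ≤ n := by unfold rho; split_ifs <;> first | contradiction | omega

lemma rho_inj (n I J : ℕ) (h1 : 1 ≤ I) (h2 : I < J) (h3 : J + 1 ≤ n) {a b : ℕ}
    (ha : a ≤ n) (hb : b ≤ n) (h : rho n I J a = rho n I J b) : a = b := by
  unfold rho at h; split_ifs at h <;> first | contradiction | omega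

lemma rho_surj (n I J : ℕ) (h1 : 1 ≤ I) (h2 : I < J) (h3 : J + 1 ≤ n) {x : ℕ} (hx : x ≤ n) :
    ∃ t, t ≤ n ∧ rho n I J t = x := by
  by_cases h0 : x = 0
  · exact ⟨0, by omega, by unfold rho; simp [h0]⟩
  by_cases hA : x < I
  · exact ⟨n + 1 - x, by omega, by unfold rho; split_ifs <;> first | contradiction | omega⟩
  by_cases hB : x ≤ J
  · obtain ⟨d, rfl⟩ : ∃ d, x = I + d := ⟨x - I, by omega⟩
    exact ⟨d + 1, by omega, by unfold rho; split_ifs <;> first | contradiction | omega⟩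
  · obtain ⟨d, rfl⟩ : ∃ d, x = J + 1 + d := ⟨x - (J + 1), by omega⟩
    exact ⟨n - I + 1 - d, by omega, by unfold rho; split_ifs <;> first | contradiction | omega⟩

lemma rho_step (n I J : ℕ) (h1 : 1 ≤ I) (h2 : I < J) (h3 : J + 1 ≤ n) (t : ℕ) (ht : t + 1 ≤ n) :
    ((rho n I J t = 0 ∧ rho n I J (t+1) = I) ∨ (rho n I J (t+1) = 0 ∧ rho n I J t = I) ∨
     (rho n I J t = I - 1 ∧ rho n I J (t+1) = J + 1) ∨ (rho n I J (t+1) = I - 1 ∧ rho n I J t = J + 1) ∨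
     (rho n I J t = n ∧ rho n I J (t+1) = J) ∨ (rho n I J (t+1) = n ∧ rho n I J t = J) ∨
     (rho n I J (t+1) = rho n I J t + 1 ∧ rho n I J t < n ∧ rho n I J t ≠ I - 1 ∧ rho n I J t ≠ J) ∨
     (rho n I J t = rho n I J (t+1) + 1 ∧ rho n I J (t+1) < n ∧ rho n I J (t+1) ≠ I - 1 ∧ rho n I J (t+1) ≠ J)) := by
  by_cases c0 : t = 0
  · exact Or.inl ⟨by unfold rho; split_ifs <;> first | contradiction | omega, by unfold rho; split_ifs <;> first | contradiction | omega⟩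
  by_cases c1 : t ≤ J - I
  · refine Or.inr (Or.inr (Or.inr (Or.inr (Or.inr (Or.inr (Or.inl
      ⟨?_, ?_, ?_, ?_⟩)))))) <;> · unfold rho; split_ifs <;> first | contradiction | omega
  by_cases c2 : t = J - I + 1
  · exact Or.inr (Or.inr (Or.inr (Or.inr (Or.inr (Or.inl
      ⟨by unfold rho; split_ifs <;> first | contradiction | omega, by unfold rho; split_ifs <;> first | contradiction | omega⟩)))))
  by_cases c3 : t ≤ n - I
  · refine Or.inr (Or.inr (Or.inr (Or.inr (Or.inr (Or.inr (Or.inr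
      ⟨?_, ?_, ?_, ?_⟩)))))) <;> · unfold rho; split_ifs <;> first | contradiction | omega
  by_cases c4 : t = n - I + 1
  · exact Or.inr (Or.inr (Or.inr (Or.inl
      ⟨by unfold rho; split_ifs <;> first | contradiction | omega, by unfold rho; split_ifs <;> first | contradiction | omega⟩)))
  · refine Or.inr (Or.inr (Or.inr (Or.inr (Or.inr (Or.inr (Or.inr
      ⟨?_, ?_, ?_, ?_⟩)))))) <;> · unfold rho; split_ifs <;> first | contradiction | omega

lemma rho_last (n I J : ℕ) (h1 : 1 ≤ I) (h2 : I < J) (h3 : J + 1 ≤ n) (hn : 2 ≤ n) :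
    ((rho n I J n = 0 ∧ rho n I J 0 = I) ∨ (rho n I J 0 = 0 ∧ rho n I J n = I) ∨
     (rho n I J n = I - 1 ∧ rho n I J 0 = J + 1) ∨ (rho n I J 0 = I - 1 ∧ rho n I J n = J + 1) ∨
     (rho n I J n = n ∧ rho n I J 0 = J) ∨ (rho n I J 0 = n ∧ rho n I J n = J) ∨
     (rho n I J 0 = rho n I J n + 1 ∧ rho n I J n < n ∧ rho n I J n ≠ I - 1 ∧ rho n I J n ≠ J) ∨
     (rho n I J n = rho n I J 0 + 1 ∧ rho n I J 0 < n ∧ rho n I J 0 ≠ I - 1 ∧ rho n I J 0 ≠ J)) := by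
  by_cases c0 : I = 1
  · exact Or.inr (Or.inr (Or.inr (Or.inl
      ⟨by unfold rho; split_ifs <;> first | contradiction | omega, by unfold rho; split_ifs <;> first | contradiction | omega⟩)))
  · refine Or.inr (Or.inr (Or.inr (Or.inr (Or.inr (Or.inr (Or.inr
      ⟨?_, ?_, ?_, ?_⟩)))))) <;> · unfold rho; split_ifs <;> first | contradiction | omega

/-- rotation closing a Hamilton path into a Hamilton cycle. Let
`γ_0 γ_1 … γ_n` be a Hamilton path (an enumeration `γ` of all `n+1` vertices), and suppose
`1 ≤ i < j ≤ n-1`. Then deleting the edges `γ_{i-1}γ_i` and `γ_jγ_{j+1}` from the path and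
adding the edges `γ_0γ_i`, `γ_{i-1}γ_{j+1}` and `γ_nγ_j` yields the edge set of a graph
containing a Hamilton cycle. -/
theorem stmt_17 (n : ℕ) (hn : 2 ≤ n) (γ : Equiv.Perm (Fin (n + 1)))
    (i j : Fin (n + 1)) (hi : 1 ≤ (i : ℕ)) (hij : (i : ℕ) < (j : ℕ)) (hj : (j : ℕ) ≤ n - 1) :
    ∃ (v : Fin (n + 1))
      (c : (SimpleGraph.fromEdgeSet
        (({e : Sym2 (Fin (n + 1)) | ∃ t : Fin n, e = s(γ t.castSucc, γ t.succ)} \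
            {s(γ (i - 1), γ i), s(γ j, γ (j + 1))}) ∪
          {s(γ 0, γ i), s(γ (i - 1), γ (j + 1)), s(γ (Fin.last n), γ j)})).Walk v v),
      c.IsHamiltonianCycle := by
  have hJn : (j : ℕ) + 1 ≤ n := by omega
  set S : Set (Sym2 (Fin (n + 1))) :=
    (({e : Sym2 (Fin (n + 1)) | ∃ t : Fin n, e = s(γ t.castSucc, γ t.succ)} \
        {s(γ (i - 1), γ i), s(γ j, γ (j + 1))}) ∪
      {s(γ 0, γ i), s(γ (i - 1), γ (j + 1)), s(γ (Fin.last n), γ j)}) with hSdef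
  set G := SimpleGraph.fromEdgeSet S with hGdef
  -- rewriting the special vertices in `Fin.mk` form
  have hone : 1 % (n + 1) = 1 := Nat.mod_eq_of_lt (by omega)
  have hγ0 : ∀ (h : 0 < n + 1), γ ⟨0, h⟩ = γ 0 := by
    intro h; congr 1
  have hγI : ∀ (h : (i : ℕ) < n + 1), γ ⟨(i : ℕ), h⟩ = γ i := fun h => rfl
  have hγJ : ∀ (h : (j : ℕ) < n + 1), γ ⟨(j : ℕ), h⟩ = γ j := fun h => rfl
  have hγlast : ∀ (h : n < n + 1), γ ⟨n, h⟩ = γ (Fin.last n) := fun h => rfl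
  have hγI1 : ∀ (h : (i : ℕ) - 1 < n + 1), γ ⟨(i : ℕ) - 1, h⟩ = γ (i - 1) := by
    intro h; congr 1
    refine Fin.ext ?_
    rw [Fin.sub_def]
    simp only [Fin.val_one']
    rw [hone, show n + 1 - 1 + (i : ℕ) = (n + 1) + ((i : ℕ) - 1) from by omega, Nat.add_mod_left,
      Nat.mod_eq_of_lt (by omega)]
  have hγJ1 : ∀ (h : (j : ℕ) + 1 < n + 1), γ ⟨(j : ℕ) + 1, h⟩ = γ (j + 1) := by
    intro h; congr 1
    refine Fin.ext ?_
    rw [Fin.add_def]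
    simp only [Fin.val_one']
    rw [hone, Nat.mod_eq_of_lt (by omega)]
  -- inequality of edges in terms of indices
  have hne2 : ∀ (a b c d : ℕ) (ha : a < n + 1) (hb : b < n + 1) (hc : c < n + 1)
      (hd : d < n + 1), ¬(a = c ∧ b = d) → ¬(a = d ∧ b = c) →
      s(γ ⟨a, ha⟩, γ ⟨b, hb⟩) ≠ s(γ ⟨c, hc⟩, γ ⟨d, hd⟩) := by
    intro a b c d ha hb hc hd h1 h2 h
    rw [Sym2.eq_iff] at h
    rcases h with ⟨x, y⟩ | ⟨x, y⟩
    · exact h1 ⟨congrArg Fin.val (γ.injective x), congrArg Fin.val (γ.injective y)⟩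
    · exact h2 ⟨congrArg Fin.val (γ.injective x), congrArg Fin.val (γ.injective y)⟩
  -- path edges that survive
  have hpathmem : ∀ (k : ℕ) (hk : k < n), k ≠ (i : ℕ) - 1 → k ≠ (j : ℕ) →
      s(γ ⟨k, by omega⟩, γ ⟨k + 1, by omega⟩) ∈ S := by
    intro k hk hk1 hk2
    apply Set.mem_union_left
    refine ⟨⟨⟨k, hk⟩, rfl⟩, ?_⟩
    · intro hmem
      simp only [Set.mem_insert_iff, Set.mem_singleton_iff] at hmem
      rcases hmem with h | h
      · rw [← hγI1 (by omega), ← hγI (by omega)] at h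
        exact hne2 k (k + 1) ((i : ℕ) - 1) (i : ℕ) (by omega) (by omega) (by omega) (by omega)
          (by omega) (by omega) h
      · rw [← hγJ (by omega), ← hγJ1 (by omega)] at h
        exact hne2 k (k + 1) (j : ℕ) ((j : ℕ) + 1) (by omega) (by omega) (by omega) (by omega)
          (by omega) (by omega) h
  -- master adjacency lemma
  have hADJ : ∀ (a b : ℕ) (ha : a < n + 1) (hb : b < n + 1),
      ((a = 0 ∧ b = (i : ℕ)) ∨ (b = 0 ∧ a = (i : ℕ)) ∨
       (a = (i : ℕ) - 1 ∧ b = (j : ℕ) + 1) ∨ (b = (i : ℕ) - 1 ∧ a = (j : ℕ) + 1) ∨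
       (a = n ∧ b = (j : ℕ)) ∨ (b = n ∧ a = (j : ℕ)) ∨
       (b = a + 1 ∧ a < n ∧ a ≠ (i : ℕ) - 1 ∧ a ≠ (j : ℕ)) ∨
       (a = b + 1 ∧ b < n ∧ b ≠ (i : ℕ) - 1 ∧ b ≠ (j : ℕ))) →
      G.Adj (γ ⟨a, ha⟩) (γ ⟨b, hb⟩) := by
    intro a b ha hb hcase
    rw [hGdef, SimpleGraph.fromEdgeSet_adj]
    constructor
    · rcases hcase with ⟨h1, h2⟩ | ⟨h1, h2⟩ | ⟨h1, h2⟩ | ⟨h1, h2⟩ | ⟨h1, h2⟩ | ⟨h1, h2⟩ |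
        ⟨h1, h2, h3, h4⟩ | ⟨h1, h2, h3, h4⟩
      · subst h1 h2; rw [hγ0, hγI]; exact Set.mem_union_right _ (by simp)
      · subst h1 h2; rw [hγ0, hγI, Sym2.eq_swap]; exact Set.mem_union_right _ (by simp)
      · subst h1 h2; rw [hγI1, hγJ1]; exact Set.mem_union_right _ (by simp)
      · subst h1 h2; rw [hγI1, hγJ1, Sym2.eq_swap]; exact Set.mem_union_right _ (by simp)
      · subst h1 h2; rw [hγlast, hγJ]; exact Set.mem_union_right _ (by simp)
      · subst h1 h2; rw [hγlast, hγJ, Sym2.eq_swap]; exact Set.mem_union_right _ (by simp)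
      · subst h1; exact hpathmem a h2 h3 h4
      · subst h1; rw [Sym2.eq_swap]; exact hpathmem b h2 h3 h4
    · intro hc
      have hab : a = b := congrArg Fin.val (γ.injective hc)
      rcases hcase with ⟨h1, h2⟩ | ⟨h1, h2⟩ | ⟨h1, h2⟩ | ⟨h1, h2⟩ | ⟨h1, h2⟩ | ⟨h1, h2⟩ |
        ⟨h1, h2, h3, h4⟩ | ⟨h1, h2, h3, h4⟩ <;> omega
  have hrle : ∀ {t : ℕ}, t ≤ n → rho n (i : ℕ) (j : ℕ) t ≤ n := fun ht => rho_le n (i : ℕ) (j : ℕ) hi hij hJn ht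
  refine exists_hamiltonian_cycle_of_cyclic G (n + 1) (by omega)
    (fun t => γ ⟨rho n (i : ℕ) (j : ℕ) t % (n + 1), Nat.mod_lt _ (by omega)⟩) ?_ ?_ ?_ ?_
  · intro a ha b hb h
    have h2 : rho n (i : ℕ) (j : ℕ) a % (n + 1) = rho n (i : ℕ) (j : ℕ) b % (n + 1) :=
      congrArg Fin.val (γ.injective h)
    rw [Nat.mod_eq_of_lt (by have := hrle (show a ≤ n by omega); omega),
      Nat.mod_eq_of_lt (by have := hrle (show b ≤ n by omega); omega)] at h2
    exact rho_inj n (i : ℕ) (j : ℕ) hi hij hJn (by omega) (by omega) h2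
  · intro v
    obtain ⟨t, ht, hxt⟩ := rho_surj n (i : ℕ) (j : ℕ) hi hij hJn (x := (γ.symm v : ℕ))
      (by omega)
    refine ⟨t, by omega, ?_⟩
    have : (⟨rho n (i : ℕ) (j : ℕ) t % (n + 1), Nat.mod_lt _ (by omega)⟩ : Fin (n + 1)) = γ.symm v := by
      refine Fin.ext ?_
      simp only
      rw [Nat.mod_eq_of_lt (by have := hrle ht; omega), hxt]
    rw [this, Equiv.apply_symm_apply]
  · intro t ht
    have e1 : rho n (i : ℕ) (j : ℕ) t % (n + 1) = rho n (i : ℕ) (j : ℕ) t :=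
      Nat.mod_eq_of_lt (by have := hrle (show t ≤ n by omega); omega)
    have e2 : rho n (i : ℕ) (j : ℕ) (t + 1) % (n + 1) = rho n (i : ℕ) (j : ℕ) (t + 1) :=
      Nat.mod_eq_of_lt (by have := hrle (show t + 1 ≤ n by omega); omega)
    apply hADJ
    rw [e1, e2]
    exact rho_step n (i : ℕ) (j : ℕ) hi hij hJn t (by omega)
  · rw [show n + 1 - 1 = n from by omega]
    have e1 : rho n (i : ℕ) (j : ℕ) n % (n + 1) = rho n (i : ℕ) (j : ℕ) n :=
      Nat.mod_eq_of_lt (by have := hrle (le_refl n); omega)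
    have e2 : rho n (i : ℕ) (j : ℕ) 0 % (n + 1) = rho n (i : ℕ) (j : ℕ) 0 :=
      Nat.mod_eq_of_lt (by have := hrle (Nat.zero_le n); omega)
    apply hADJ
    rw [e1, e2]
    exact rho_last n (i : ℕ) (j : ℕ) hi hij hJn hn
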